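/- Let $x_1, \dots, x_k \in \mathbb{R}^d$ with $\|x_i\|_2 \le L$ for all $i$, let $\lambda > 0$, and define $V_t = \lambda I + \sum_{i=1}^t x_i x_i^\top$. Then $\sum_{t=1}^k \min\{1, \|x_t\|_{V_{t-1}^{-1}}^2\} \le 2 \ln \frac{\det(V_k)}{\det(\lambda I)} \le 2d \ln\left(\frac{d\lambda + kL^2}{d\lambda}\right)$, where $\|x\|_{A}^2 = x^\top A x$. -/

import Mathlib

open Matrix Finset

lemma aux_min_le_log {u : ℝ} (hu : 0 ≤ u) : min 1 u ≤ 2 * Real.log (1 + u) := by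
  have hlog2 : (1:ℝ) ≤ 2 * Real.log 2 := by nlinarith [Real.log_two_gt_d9]
  rcases le_total u 1 with h | h
  · rw [min_eq_right h]
    have hc := strictConcaveOn_log_Ioi.concaveOn.2 (Set.mem_Ioi.mpr one_pos)
      (Set.mem_Ioi.mpr two_pos) (sub_nonneg.mpr h) hu (by ring)
    simp only [smul_eq_mul, Real.log_one, mul_zero, zero_add] at hc
    have : (1 - u) * 1 + u * 2 = 1 + u := by ring
    rw [this] at hc
    nlinarith [Real.log_nonneg (by norm_num : (1:ℝ) ≤ 2)]
  · rw [min_eq_left h]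
    have : Real.log 2 ≤ Real.log (1 + u) := Real.log_le_log two_pos (by linarith)
    linarith

lemma aux_vmv_psd {d : ℕ} (v : Fin d → ℝ) : (vecMulVec v v).PosSemidef := by
  rw [vecMulVec_eq Unit]
  have h := posSemidef_conjTranspose_mul_self (replicateRow Unit v)
  rwa [conjTranspose_replicateRow, star_trivial] at h

lemma aux_sum_psd {d : ℕ} (x : ℕ → Fin d → ℝ) (s : Finset ℕ) :
    (∑ i ∈ s, vecMulVec (x i) (x i)).PosSemidef := by
  classical
  induction s using Finset.induction with
  | empty => simpa using Matrix.PosSemidef.zero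
  | insert _ _ h ih => rw [Finset.sum_insert h]; exact (aux_vmv_psd _).add ih

lemma aux_posdef {d : ℕ} (lam : ℝ) (hlam : 0 < lam) (S : Matrix (Fin d) (Fin d) ℝ)
    (hS : S.PosSemidef) : (lam • (1 : Matrix (Fin d) (Fin d) ℝ) + S).PosDef := by
  refine Matrix.PosDef.add_posSemidef ?_ hS
  rw [smul_one_eq_diagonal]
  exact posDef_diagonal_iff.mpr fun _ => hlam

lemma aux_det_step {d : ℕ} (A : Matrix (Fin d) (Fin d) ℝ) (hA : A.PosDef) (v : Fin d → ℝ) :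
    (A + vecMulVec v v).det = A.det * (1 + v ⬝ᵥ (A⁻¹ *ᵥ v)) := by
  rw [vecMulVec_eq Unit, det_add_replicateCol_mul_replicateRow hA.det_pos.ne'.isUnit]
  congr 1
  rw [det_unique, Matrix.add_apply, Matrix.one_apply_eq, ← replicateRow_vecMul, replicateRow_mul_replicateCol_apply,
    ← dotProduct_mulVec]

lemma aux_trace_eq {d : ℕ} (A : Matrix (Fin d) (Fin d) ℝ) (hH : A.IsHermitian) :
    A.trace = ∑ i, hH.eigenvalues i := by
  simpa using hH.trace_eq_sum_eigenvalues

lemma aux_det_le_trace {d : ℕ} (hd : 0 < d) (A : Matrix (Fin d) (Fin d) ℝ) (hA : A.PosDef) :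
    A.det ≤ (A.trace / d) ^ d := by
  have hH := hA.isHermitian
  have hev : ∀ i, 0 < hH.eigenvalues i := hA.eigenvalues_pos
  have hdet : A.det = ∏ i, hH.eigenvalues i := by simpa using hH.det_eq_prod_eigenvalues
  have htr : A.trace = ∑ i, hH.eigenvalues i := aux_trace_eq A hH
  have hdr : (0:ℝ) < d := Nat.cast_pos.mpr hd
  have amgm := Real.geom_mean_le_arith_mean_weighted Finset.univ (fun _ => (d:ℝ)⁻¹)
    hH.eigenvalues (fun _ _ => by positivity) (by simp [Finset.card_univ]; field_simp)
    (fun i _ => (hev i).le)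
  have key : (∏ i, hH.eigenvalues i ^ ((d:ℝ)⁻¹)) ^ (d:ℕ) = ∏ i, hH.eigenvalues i := by
    rw [← Finset.prod_pow]
    refine Finset.prod_congr rfl fun i _ => ?_
    rw [← Real.rpow_natCast (hH.eigenvalues i ^ ((d:ℝ)⁻¹)) d, ← Real.rpow_mul (hev i).le]
    rw [inv_mul_cancel₀ hdr.ne', Real.rpow_one]
  have hprodnn : 0 ≤ ∏ i, hH.eigenvalues i ^ ((d:ℝ)⁻¹) :=
    Finset.prod_nonneg fun i _ => Real.rpow_nonneg (hev i).le _
  calc A.det = (∏ i, hH.eigenvalues i ^ ((d:ℝ)⁻¹)) ^ (d:ℕ) := by rw [key, hdet]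
    _ ≤ (∑ i, (d:ℝ)⁻¹ * hH.eigenvalues i) ^ (d:ℕ) := pow_le_pow_left₀ hprodnn amgm d
    _ = (A.trace / d) ^ d := by rw [htr, ← Finset.mul_sum]; ring_nf

theorem stmt_19 (d k : ℕ) (hd : 0 < d) (x : ℕ → Fin d → ℝ) (L : ℝ) (hL : 0 < L)
    (hx : ∀ i ∈ Icc 1 k, x i ⬝ᵥ x i ≤ L ^ 2)
    (lam : ℝ) (hlam : 0 < lam)
    (V : ℕ → Matrix (Fin d) (Fin d) ℝ)
    (hV : ∀ t, V t = lam • (1 : Matrix (Fin d) (Fin d) ℝ) +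
      ∑ i ∈ Icc 1 t, vecMulVec (x i) (x i)) :
    (∑ t ∈ Icc 1 k, min 1 (x t ⬝ᵥ ((V (t - 1))⁻¹ *ᵥ x t)) ≤
        2 * Real.log ((V k).det / (lam • (1 : Matrix (Fin d) (Fin d) ℝ)).det)) ∧
    2 * Real.log ((V k).det / (lam • (1 : Matrix (Fin d) (Fin d) ℝ)).det) ≤
      2 * d * Real.log ((d * lam + k * L ^ 2) / (d * lam)) := by
  have hVpd : ∀ t, (V t).PosDef := fun t => by
    rw [hV t]; exact aux_posdef _ hlam _ (aux_sum_psd x _)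
  have hdetpos : ∀ t, 0 < (V t).det := fun t => (hVpd t).det_pos
  set u : ℕ → ℝ := fun t => x t ⬝ᵥ ((V (t - 1))⁻¹ *ᵥ x t) with hu
  have hunn : ∀ t, 0 ≤ u t := fun t => by
    have h := ((hVpd (t-1)).inv).posSemidef.dotProduct_mulVec_nonneg (x t)
    simpa [hu] using h
  have hstep : ∀ t, (V (t+1)).det = (V t).det * (1 + u (t+1)) := by
    intro t
    have hVt : V (t+1) = V t + vecMulVec (x (t+1)) (x (t+1)) := by
      rw [hV, hV, Finset.sum_Icc_succ_top (Nat.succ_le_succ (Nat.zero_le t)), add_assoc]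
    rw [hVt, aux_det_step _ (hVpd t)]
    simp [hu]
  have hV0 : V 0 = lam • (1 : Matrix (Fin d) (Fin d) ℝ) := by rw [hV]; simp
  have htel : ∀ n, Real.log ((V n).det) - Real.log ((V 0).det)
      = ∑ t ∈ Icc 1 n, Real.log (1 + u t) := by
    intro n; induction n with
    | zero => simp
    | succ n ih =>
      rw [Finset.sum_Icc_succ_top (Nat.succ_le_succ (Nat.zero_le n)), ← ih, hstep n,
        Real.log_mul (hdetpos n).ne' (by have := hunn (n+1); positivity)]
      ring
  have hlogratio : Real.log ((V k).det / (lam • (1 : Matrix (Fin d) (Fin d) ℝ)).det)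
      = ∑ t ∈ Icc 1 k, Real.log (1 + u t) := by
    rw [Real.log_div (hdetpos k).ne' (by rw [← hV0]; exact (hdetpos 0).ne'), ← hV0, htel]
  constructor
  · calc ∑ t ∈ Icc 1 k, min 1 (u t) ≤ ∑ t ∈ Icc 1 k, 2 * Real.log (1 + u t) :=
        Finset.sum_le_sum fun t _ => aux_min_le_log (hunn t)
      _ = 2 * Real.log ((V k).det / (lam • (1 : Matrix (Fin d) (Fin d) ℝ)).det) := by
        rw [← Finset.mul_sum, hlogratio]
  · have hdr : (0:ℝ) < d := Nat.cast_pos.mpr hd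
    set T : ℝ := d * lam + k * L ^ 2 with hT
    have hTpos : 0 < T := by positivity
    have hdet0 : (lam • (1 : Matrix (Fin d) (Fin d) ℝ)).det = lam ^ d := by
      simp [det_smul, Fintype.card_fin]
    have htrace : (V k).trace ≤ T := by
      rw [hV, trace_add, trace_smul, trace_one, trace_sum]
      have h1 : ∀ i ∈ Icc 1 k, (vecMulVec (x i) (x i)).trace ≤ L ^ 2 := fun i hi => by
        rw [vecMulVec_eq Unit, trace_replicateCol_mul_replicateRow]; exact hx i hi
      have h2 : ∑ i ∈ Icc 1 k, (vecMulVec (x i) (x i)).trace ≤ k * L ^ 2 := by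
        calc ∑ i ∈ Icc 1 k, (vecMulVec (x i) (x i)).trace ≤ ∑ i ∈ Icc 1 k, L ^ 2 :=
            Finset.sum_le_sum h1
          _ = k * L ^ 2 := by rw [Finset.sum_const, Nat.card_Icc]; simp
      simp only [smul_eq_mul, Fintype.card_fin]
      linarith
    have htrpos : 0 < (V k).trace := by
      rw [aux_trace_eq _ (hVpd k).isHermitian]
      have : Nonempty (Fin d) := ⟨⟨0, hd⟩⟩
      exact Finset.sum_pos (fun i _ => (hVpd k).eigenvalues_pos i) Finset.univ_nonempty
    have hdetle : (V k).det ≤ (T / d) ^ d := by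
      refine (aux_det_le_trace hd _ (hVpd k)).trans ?_
      exact pow_le_pow_left₀ (div_nonneg htrpos.le hdr.le) (by gcongr) d
    have hratio : (V k).det / lam ^ d ≤ (T / (d * lam)) ^ d := by
      have : (T / (d * lam)) ^ d = (T / d) ^ d / lam ^ d := by
        rw [div_pow, div_pow, mul_pow]; field_simp
      rw [this]
      gcongr
    have hlog : Real.log ((V k).det / lam ^ d) ≤ (d : ℝ) * Real.log (T / (d * lam)) := by
      have := Real.log_le_log (div_pos (hdetpos k) (pow_pos hlam d)) hratio
      rwa [Real.log_pow] at this
    rw [hdet0]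
    calc 2 * Real.log ((V k).det / lam ^ d) ≤ 2 * ((d:ℝ) * Real.log (T / (d * lam))) := by
          linarith
      _ = 2 * d * Real.log ((d * lam + k * L ^ 2) / (d * lam)) := by rw [hT]; ring
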